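/- arXiv:2201.12065 — 3 statements merged into one kernel-verified Lean document; each statement's English description precedes it below -/
import Mathlib

section
/- The four quadrics q_0 = a_{1,2}a_{1,3} − a_{2,1}a_{2,3} + a_{3,1}a_{3,2}, q_1 = a_{0,2}a_{0,3} − a_{3,0}a_{3,2} + a_{2,0}a_{2,3}, q_2 = a_{1,0}a_{1,3} − a_{0,1}a_{0,3} + a_{3,0}a_{3,1}, q_3 = a_{0,1}a_{0,2} − a_{1,0}a_{1,2} + a_{2,0}a_{2,1} form a regular sequence in the polynomial ring ℂ[a_{0,1}, a_{0,2}, a_{0,3}, a_{1,0}, a_{1,2}, a_{1,3}, a_{2,0}, a_{2,1}, a_{2,3}, a_{3,0}, a_{3,1}, a_{3,2}] in 12 variables; in particular Q = V(q_0,q_1,q_2,q_3) ⊆ P^11 is a complete intersection of codimension 4. -/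
/- Variable indices in `Fin 12`:
0:a₀₁ 1:a₀₂ 2:a₀₃ 3:a₁₀ 4:a₁₂ 5:a₁₃ 6:a₂₀ 7:a₂₁ 8:a₂₃ 9:a₃₀ 10:a₃₁ 11:a₃₂ -/

open MvPolynomial

noncomputable section

abbrev Sa : Type := MvPolynomial (Fin 12) ℂ

def q0 : Sa := X 4 * X 5 - X 7 * X 8 + X 10 * X 11
def q1 : Sa := X 1 * X 2 - X 9 * X 11 + X 6 * X 8
def q2 : Sa := X 3 * X 5 - X 0 * X 2 + X 9 * X 10
def q3 : Sa := X 0 * X 1 - X 3 * X 4 + X 6 * X 7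


section Helpers



variable {R : Type*} [CommRing R] [IsDomain R]

-- cancellation: if Polynomial.C p * g = f * h with f = Polynomial.C p * Polynomial.X + Polynomial.C d, p prime, p ∤ d, then f ∣ g
lemma cancel_aux {p d : R} (hp : Prime p) (hpd : ¬ p ∣ d) {g h : (Polynomial R)}
    (H : Polynomial.C p * g = (Polynomial.C p * Polynomial.X + Polynomial.C d) * h) : (Polynomial.C p * Polynomial.X + Polynomial.C d) ∣ g := by
  have hpd' : (Ideal.Quotient.mk (Ideal.span {p}) d) ≠ 0 := by
    rw [Ne, Ideal.Quotient.eq_zero_iff_mem, Ideal.mem_span_singleton]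
    exact hpd
  have hdom : (Ideal.span {p}).IsPrime := (Ideal.span_singleton_prime hp.ne_zero).mpr hp
  -- map to (R/(p))[X]
  set mk := Ideal.Quotient.mk (Ideal.span {p}) with hmk
  have hp0 : mk p = 0 :=
    Ideal.Quotient.eq_zero_iff_mem.mpr (Ideal.mem_span_singleton.mpr (dvd_refl p))
  have hmapped : (0 : Polynomial (R ⧸ Ideal.span {p})) = Polynomial.C (mk d) * h.map mk := by
    have h2 := congrArg (Polynomial.map mk) H
    rw [Polynomial.map_mul, Polynomial.map_mul, Polynomial.map_add, Polynomial.map_mul,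
      Polynomial.map_C, Polynomial.map_C, hp0] at h2
    simpa using h2
  have hh0 : h.map mk = 0 := by
    rcases mul_eq_zero.mp hmapped.symm with h1 | h2
    · exact absurd (by simpa using h1) hpd'
    · exact h2
  -- so all coefficients of h divisible by p
  have hCp : Polynomial.C p ∣ h := by
    rw [Polynomial.C_dvd_iff_dvd_coeff]
    intro i
    have : mk (h.coeff i) = 0 := by
      rw [← Polynomial.coeff_map, hh0, Polynomial.coeff_zero]
    rw [← Ideal.mem_span_singleton]
    exact Ideal.Quotient.eq_zero_iff_mem.mp this
  obtain ⟨h', rfl⟩ := hCp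
  refine ⟨h', ?_⟩
  have hCp0 : (Polynomial.C p : (Polynomial R)) ≠ 0 := by simpa using hp.ne_zero
  apply mul_left_cancel₀ hCp0
  rw [H]; ring

lemma primeL {p d : R} (hp : Prime p) (hpd : ¬ p ∣ d) : Prime (Polynomial.C p * Polynomial.X + Polynomial.C d : (Polynomial R)) := by
  classical
  set L := Localization.Away p with hL
  haveI : IsDomain L :=
    IsLocalization.isDomain_localization
      (powers_le_nonZeroDivisors_of_noZeroDivisors hp.ne_zero)
  have hinj : Function.Injective (algebraMap R L) :=
    IsLocalization.injective L (powers_le_nonZeroDivisors_of_noZeroDivisors hp.ne_zero)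
  set t : L := -(algebraMap R L d * IsLocalization.Away.invSelf p) with ht
  set φ : (Polynomial R) →+* L := Polynomial.eval₂RingHom (algebraMap R L) t with hφ
  have hφf : φ (Polynomial.C p * Polynomial.X + Polynomial.C d) = 0 := by
    simp only [hφ, Polynomial.coe_eval₂RingHom, Polynomial.eval₂_add, Polynomial.eval₂_mul, Polynomial.eval₂_C, Polynomial.eval₂_X, ht]
    have h1 : algebraMap R L p * IsLocalization.Away.invSelf p = 1 :=
      IsLocalization.Away.mul_invSelf p
    rw [show (algebraMap R L) p * -((algebraMap R L) d * IsLocalization.Away.invSelf p)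
        = -((algebraMap R L) d * ((algebraMap R L) p * IsLocalization.Away.invSelf p)) by ring,
      h1, mul_one, neg_add_cancel]
  -- kernel elements are divisible by f
  have key : ∀ n (g : (Polynomial R)), g.natDegree ≤ n → φ g = 0 → (Polynomial.C p * Polynomial.X + Polynomial.C d) ∣ g := by
    intro n
    induction n with
    | zero =>
      intro g hdeg h0
      rw [Polynomial.eq_C_of_natDegree_le_zero hdeg] at h0 ⊢
      have : g.coeff 0 = 0 := by
        apply hinj
        simpa [hφ] using h0
      rw [this, map_zero]
      exact dvd_zero _
    | succ n ih =>
      intro g hdeg h0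
      by_cases hle : g.natDegree ≤ n
      · exact ih g hle h0
      set a := g.coeff (n+1) with ha
      set g' : (Polynomial R) := Polynomial.C p * g - (Polynomial.C p * Polynomial.X + Polynomial.C d) * (Polynomial.C a * Polynomial.X^n) with hg'
      have hdeg' : g'.natDegree ≤ n := by
        rw [Polynomial.natDegree_le_iff_coeff_eq_zero]
        intro N hN
        have hexp : (Polynomial.C p * Polynomial.X + Polynomial.C d) * (Polynomial.C a * Polynomial.X^n) = Polynomial.C (p*a) * Polynomial.X^(n+1) + Polynomial.C (d*a) * Polynomial.X^n := by
          simp only [Polynomial.C_mul]; ring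
        rw [hg', Polynomial.coeff_sub, hexp, Polynomial.coeff_add, Polynomial.coeff_C_mul,
          Polynomial.coeff_C_mul, Polynomial.coeff_C_mul, Polynomial.coeff_X_pow,
          Polynomial.coeff_X_pow]
        rcases eq_or_lt_of_le (Nat.succ_le_of_lt hN) with heq | hlt
        · rw [← heq]
          simp [← ha, if_neg (Nat.ne_of_gt hN)]
        · have hgN : g.coeff N = 0 :=
            Polynomial.coeff_eq_zero_of_natDegree_lt (lt_of_le_of_lt hdeg hlt)
          rw [hgN, if_neg (by omega), if_neg (Nat.ne_of_gt hN)]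
          ring
      have hφg' : φ g' = 0 := by
        rw [hg', map_sub, map_mul, map_mul, hφf, h0, mul_zero, zero_mul, sub_zero]
      have hdvd' : (Polynomial.C p * Polynomial.X + Polynomial.C d) ∣ g' := ih g' hdeg' hφg'
      have hdvdCp : (Polynomial.C p * Polynomial.X + Polynomial.C d) ∣ Polynomial.C p * g := by
        have : Polynomial.C p * g = g' + (Polynomial.C p * Polynomial.X + Polynomial.C d) * (Polynomial.C a * Polynomial.X^n) := by rw [hg']; ring
        rw [this]
        exact dvd_add hdvd' (dvd_mul_right _ _)
      obtain ⟨h, hh⟩ := hdvdCp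
      exact cancel_aux hp hpd hh
  have hker : ∀ g : (Polynomial R), φ g = 0 → (Polynomial.C p * Polynomial.X + Polynomial.C d) ∣ g :=
    fun g h0 => key g.natDegree g le_rfl h0
  have hker' : ∀ g : (Polynomial R), (Polynomial.C p * Polynomial.X + Polynomial.C d) ∣ g → φ g = 0 := by
    rintro g ⟨c, rfl⟩
    rw [map_mul, hφf, zero_mul]
  haveI : Nontrivial L := hinj.nontrivial
  refine ⟨?_, ?_, ?_⟩
  · intro hf0
    have hc := congrArg (fun q => Polynomial.coeff q 1) hf0
    simp only [Polynomial.coeff_add, Polynomial.coeff_C_mul, Polynomial.coeff_X_one,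
      Polynomial.coeff_C, Polynomial.coeff_zero, mul_one] at hc
    rw [if_neg one_ne_zero, add_zero] at hc
    exact hp.ne_zero hc
  · intro hu
    obtain ⟨c, hc⟩ := IsUnit.exists_right_inv hu
    have h1 : φ 1 = 0 := by rw [← hc, map_mul, hφf, zero_mul]
    rw [map_one] at h1
    exact one_ne_zero h1
  · intro a b hab
    have h0 := hker' _ hab
    rw [map_mul] at h0
    rcases mul_eq_zero.mp h0 with h | h
    exacts [Or.inl (hker _ h), Or.inr (hker _ h)]

open Ideal in
lemma isPrime_of_map_isPrime {R S : Type*} [CommRing R] [CommRing S] {f : R →+* S}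
    (hf : Function.Surjective f) {J : Ideal R} (hker : RingHom.ker f ≤ J)
    (h : (J.map f).IsPrime) : J.IsPrime := by
  have h2 := h.comap f
  rwa [Ideal.comap_map_of_surjective f hf, ← RingHom.ker_eq_comap_bot,
    sup_eq_left.mpr hker] at h2

lemma prime_mk_of_surjective {R S : Type*} [CommRing R] [CommRing S] {f : R →+* S}
    (hf : Function.Surjective f) {I : Ideal R} (hI : RingHom.ker f = I) {x : R}
    (hp : Prime (f x)) : Prime (Ideal.Quotient.mk I x) := by
  subst hI
  set e : R ⧸ RingHom.ker f ≃+* S := RingHom.quotientKerEquivOfSurjective hf with he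
  rw [← MulEquiv.prime_iff e.toMulEquiv]
  have hx : e.toMulEquiv (Ideal.Quotient.mk _ x) = f x := by
    simp [he, RingHom.quotientKerEquivOfSurjective, RingHom.quotientKerEquivOfRightInverse]
    rfl
  rwa [hx]

lemma mem_map_ringEquiv_iff {R S : Type*} [CommRing R] [CommRing S] (e : R ≃+* S)
    (I : Ideal R) (x : R) : e x ∈ I.map (e : R →+* S) ↔ x ∈ I := by
  constructor
  · intro h
    have h2 : x ∈ (I.map (e : R →+* S)).comap (e : R →+* S) := by
      simpa [Ideal.mem_comap] using h
    rwa [Ideal.comap_map_of_surjective (e : R →+* S) e.surjective, ← RingHom.ker_eq_comap_bot,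
      (RingHom.injective_iff_ker_eq_bot (e : R →+* S)).mp e.injective, sup_bot_eq] at h2
  · exact fun h => Ideal.mem_map_of_mem _ h

lemma not_mem_span_of_hom {R S : Type*} [CommRing R] [CommRing S] (f : R →+* S)
    {s : Set R} (h0 : ∀ g ∈ s, f g = 0) {x : R} (hx : f x ≠ 0) : x ∉ Ideal.span s := by
  intro hmem
  have h1 : f x ∈ (Ideal.span s).map f := Ideal.mem_map_of_mem f hmem
  rw [Ideal.map_span] at h1
  have hle : Ideal.span (f '' s) ≤ ⊥ := Ideal.span_le.mpr
    (by rintro y ⟨g, hg, rfl⟩; simpa using h0 g hg)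
  exact hx (hle h1)

open Polynomial in
lemma layer {R : Type*} [CommRing R] {I : Ideal R} [hI : I.IsPrime] {p d : R}
    (hp : Prime (Ideal.Quotient.mk I p))
    (hd : d ∉ I ⊔ Ideal.span {p}) :
    (Ideal.map (Polynomial.C : R →+* (Polynomial R)) I ⊔ Ideal.span {Polynomial.C p * Polynomial.X + Polynomial.C d}).IsPrime := by
  set mkI := Ideal.Quotient.mk I with hmkI
  have hpd : ¬ (mkI p ∣ mkI d) := by
    rintro ⟨c, hc⟩
    obtain ⟨c', rfl⟩ := Ideal.Quotient.mk_surjective c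
    have hmem : d - p * c' ∈ I := by
      rw [← Ideal.Quotient.eq_zero_iff_mem]
      rw [map_sub, map_mul, ← hc]
      ring
    have : d = (d - p * c') + p * c' := by ring
    refine hd ?_
    rw [this]
    exact Ideal.add_mem _ (Ideal.mem_sup_left hmem)
      (Ideal.mem_sup_right (Ideal.mem_span_singleton.mpr (dvd_mul_right p c')))
  have hprime := primeL hp hpd
  set ψ : (Polynomial R) →+* Polynomial (R ⧸ I) := Polynomial.mapRingHom mkI with hψ
  have hsurj : Function.Surjective ψ := Polynomial.map_surjective _ Ideal.Quotient.mk_surjective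
  have hker : RingHom.ker ψ = I.map (Polynomial.C : R →+* (Polynomial R)) := by
    rw [hψ, Polynomial.ker_mapRingHom, hmkI, Ideal.mk_ker]
  apply isPrime_of_map_isPrime hsurj (le_trans (le_of_eq hker) le_sup_left)
  have hmap : (Ideal.map (Polynomial.C : R →+* (Polynomial R)) I ⊔ Ideal.span {Polynomial.C p * Polynomial.X + Polynomial.C d}).map ψ
      = Ideal.span {Polynomial.C (mkI p) * Polynomial.X + Polynomial.C (mkI d)} := by
    rw [Ideal.map_sup, Ideal.map_map, Ideal.map_span, Set.image_singleton]
    have h1 : Ideal.map (ψ.comp (Polynomial.C : R →+* (Polynomial R))) I = ⊥ := by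
      have hcomp : ψ.comp (Polynomial.C : R →+* (Polynomial R)) = (Polynomial.C : (R⧸I) →+* Polynomial (R ⧸ I)).comp mkI := by
        ext r; simp [hψ]
      rw [hcomp, ← Ideal.map_map, hmkI, Ideal.map_quotient_self, Ideal.map_bot]
    have h2 : ψ (Polynomial.C p * Polynomial.X + Polynomial.C d) = Polynomial.C (mkI p) * Polynomial.X + Polynomial.C (mkI d) := by
      simp [hψ]
    rw [h1, h2, bot_sup_eq]
  rw [hmap]
  exact (Ideal.span_singleton_prime hprime.ne_zero).mpr hprime

open Polynomial in
lemma prime_mk_X {R : Type*} [CommRing R] {J : Ideal R} [J.IsPrime] :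
    Prime (Ideal.Quotient.mk (J.map (Polynomial.C : R →+* (Polynomial R))) Polynomial.X) := by
  haveI : IsDomain (R ⧸ J) := Ideal.Quotient.isDomain J
  apply prime_mk_of_surjective
    (f := Polynomial.mapRingHom (Ideal.Quotient.mk J))
    (Polynomial.map_surjective _ Ideal.Quotient.mk_surjective)
    (by rw [Polynomial.ker_mapRingHom, Ideal.mk_ker])
  rw [Polynomial.coe_mapRingHom, Polynomial.map_X]
  exact Polynomial.prime_X

end Helpers

section MvHelpers

variable {n : ℕ}

abbrev MvC (n : ℕ) : Type := MvPolynomial (Fin n) ℂ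

def φR (n : ℕ) : MvC n →+* MvC (n+1) :=
  (rename (Fin.succ : Fin n → Fin (n+1))).toRingHom

@[simp] lemma φR_apply (r : MvC n) : φR n r = rename Fin.succ r := rfl

lemma e_rename (r : MvC n) :
    MvPolynomial.finSuccEquiv ℂ n (rename Fin.succ r) = Polynomial.C r := by
  induction r using MvPolynomial.induction_on with
  | C a =>
    simp [MvPolynomial.finSuccEquiv_apply, MvPolynomial.eval₂Hom_C]
  | add p q hp hq => simp [map_add, hp, hq]
  | mul_X p i hp =>
    rw [map_mul, map_mul, hp, rename_X, MvPolynomial.finSuccEquiv_X_succ, map_mul]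

lemma prime_X0 : Prime (X 0 : MvC (n+1)) := by
  rw [← MulEquiv.prime_iff (MvPolynomial.finSuccEquiv ℂ n).toMulEquiv]
  show Prime (MvPolynomial.finSuccEquiv ℂ n (X 0))
  rw [MvPolynomial.finSuccEquiv_X_zero]
  exact Polynomial.prime_X

lemma prime_X_mv (i : Fin (n+1)) : Prime (X i : MvC (n+1)) := by
  have h := (MulEquiv.prime_iff (renameEquiv ℂ (Equiv.swap (0 : Fin (n+1)) i)).toMulEquiv
    (p := (X 0 : MvC (n+1)))).symm
  have h2 : (renameEquiv ℂ (Equiv.swap (0 : Fin (n+1)) i)).toMulEquiv (X 0) = X i := by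
    show (renameEquiv ℂ (Equiv.swap (0 : Fin (n+1)) i)) (X 0) = X i
    simp [renameEquiv_apply, rename_X]
  rw [h2] at h
  exact h.mp prime_X0

lemma prime_lift {g : MvC n} (hg : Prime g) : Prime (rename Fin.succ g : MvC (n+1)) := by
  rw [← MulEquiv.prime_iff (MvPolynomial.finSuccEquiv ℂ n).toMulEquiv]
  show Prime (MvPolynomial.finSuccEquiv ℂ n (rename Fin.succ g))
  rw [e_rename]
  exact Polynomial.prime_C_iff.mpr hg



def eE (n : ℕ) : MvC (n+1) ≃+* Polynomial (MvC n) := (MvPolynomial.finSuccEquiv ℂ n).toRingEquiv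

@[simp] lemma eE_apply (x : MvC (n+1)) : eE n x = MvPolynomial.finSuccEquiv ℂ n x := rfl

lemma ker_eE_le {J : Ideal (MvC (n+1))} : RingHom.ker ((eE n : MvC (n+1) →+* Polynomial (MvC n))) ≤ J := by
  rw [(RingHom.injective_iff_ker_eq_bot ((eE n : MvC (n+1) →+* Polynomial (MvC n)))).mp (eE n).injective]
  exact bot_le

lemma eE_comp_φR : ((eE n : MvC (n+1) →+* Polynomial (MvC n))).comp (φR n)
    = (Polynomial.C : MvC n →+* Polynomial (MvC n)) :=
  RingHom.ext fun r => e_rename r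

lemma isPrime_map_lift {I : Ideal (MvC n)} [hI : I.IsPrime] : (I.map (φR n)).IsPrime := by
  apply isPrime_of_map_isPrime (f := (eE n : MvC (n+1) →+* Polynomial (MvC n))) (eE n).surjective ker_eE_le
  rw [Ideal.map_map, eE_comp_φR]
  exact Ideal.isPrime_map_C_of_isPrime

lemma base_mv {p d : MvC n} (hp : Prime p) (hpd : ¬ p ∣ d) :
    Prime (rename Fin.succ p * X 0 + rename Fin.succ d : MvC (n+1)) := by
  rw [← MulEquiv.prime_iff (MvPolynomial.finSuccEquiv ℂ n).toMulEquiv]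
  show Prime (MvPolynomial.finSuccEquiv ℂ n (rename Fin.succ p * X 0 + rename Fin.succ d))
  rw [map_add, map_mul, e_rename, e_rename, MvPolynomial.finSuccEquiv_X_zero]
  exact primeL hp hpd

lemma eE_gen (p d : MvC n) : (eE n : MvC (n+1) →+* Polynomial (MvC n))
      (rename Fin.succ p * X 0 + rename Fin.succ d)
    = Polynomial.C p * Polynomial.X + Polynomial.C d := by
  show MvPolynomial.finSuccEquiv ℂ n _ = _
  rw [map_add, map_mul, e_rename, e_rename, MvPolynomial.finSuccEquiv_X_zero]

lemma layer_mv {I : Ideal (MvC n)} [hI : I.IsPrime] {p d : MvC n}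
    (hp : Prime (Ideal.Quotient.mk I p)) (hd : d ∉ I ⊔ Ideal.span {p}) :
    (I.map (φR n) ⊔ Ideal.span {rename Fin.succ p * X 0 + rename Fin.succ d}).IsPrime := by
  apply isPrime_of_map_isPrime (f := (eE n : MvC (n+1) →+* Polynomial (MvC n))) (eE n).surjective ker_eE_le
  rw [Ideal.map_sup, Ideal.map_map, Ideal.map_span, Set.image_singleton, eE_comp_φR, eE_gen]
  exact layer hp hd

lemma prime_mk_X0_map {I : Ideal (MvC n)} [hI : I.IsPrime] :
    Prime (Ideal.Quotient.mk (I.map (φR n)) (X 0)) := by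
  have hmap : I.map (Polynomial.C : MvC n →+* Polynomial (MvC n))
      = (I.map (φR n)).map ((eE n : MvC (n+1) ≃+* Polynomial (MvC n)) : MvC (n+1) →+* Polynomial (MvC n)) := by
    rw [Ideal.map_map, eE_comp_φR]
  set E := Ideal.quotientEquiv (I.map (φR n)) (I.map (Polynomial.C : MvC n →+* Polynomial (MvC n)))
    (eE n) hmap
  rw [← MulEquiv.prime_iff (M := MvC (n+1) ⧸ I.map (φR n)) (N := Polynomial (MvC n) ⧸ I.map (Polynomial.C : MvC n →+* Polynomial (MvC n))) E]
  have happ : E.toMulEquiv (Ideal.Quotient.mk (I.map (φR n)) (X 0))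
      = Ideal.Quotient.mk (I.map (Polynomial.C : MvC n →+* Polynomial (MvC n))) Polynomial.X := by
    show E (Ideal.Quotient.mk _ (X 0)) = _
    rw [Ideal.quotientEquiv_mk]
    congr 1
    show MvPolynomial.finSuccEquiv ℂ n (X 0) = Polynomial.X
    exact MvPolynomial.finSuccEquiv_X_zero
  rw [show E (Ideal.Quotient.mk (I.map (φR n)) (X 0)) = E.toMulEquiv (Ideal.Quotient.mk (I.map (φR n)) (X 0)) from rfl, happ]
  exact prime_mk_X

-- the "kill X 0" ring hom
def κR (n : ℕ) : MvC (n+1) →+* MvC n :=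
  (Polynomial.evalRingHom (0 : MvC n)).comp (eE n : MvC (n+1) →+* Polynomial (MvC n))

@[simp] lemma κR_φR (r : MvC n) : κR n (φR n r) = r := by
  show (Polynomial.evalRingHom (0 : MvC n)) ((eE n : MvC (n+1) →+* Polynomial (MvC n)) (φR n r)) = r
  rw [show (eE n : MvC (n+1) →+* Polynomial (MvC n)) (φR n r) = Polynomial.C r from e_rename r]
  simp

@[simp] lemma κR_X0 : κR n (X 0) = 0 := by
  show (Polynomial.evalRingHom (0 : MvC n)) ((eE n : MvC (n+1) →+* Polynomial (MvC n)) (X 0)) = 0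
  rw [show (eE n : MvC (n+1) →+* Polynomial (MvC n)) (X 0) = Polynomial.X from MvPolynomial.finSuccEquiv_X_zero]
  simp

lemma κR_surjective : Function.Surjective (κR n) :=
  fun r => ⟨φR n r, κR_φR r⟩

lemma ker_κR : RingHom.ker (κR n) = Ideal.span {(X 0 : MvC (n+1))} := by
  ext x
  rw [RingHom.mem_ker]
  constructor
  · intro hx
    have hx2 : (eE n : MvC (n+1) →+* Polynomial (MvC n)) x
        ∈ RingHom.ker (Polynomial.evalRingHom (0 : MvC n)) := hx
    rw [Polynomial.ker_evalRingHom,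
      show Polynomial.X - Polynomial.C (0 : MvC n) = Polynomial.X by rw [map_zero, sub_zero],
      Ideal.mem_span_singleton] at hx2
    obtain ⟨c, hc⟩ := hx2
    rw [Ideal.mem_span_singleton]
    refine ⟨(eE n).symm c, ?_⟩
    apply (eE n).injective
    show (eE n : MvC (n+1) →+* Polynomial (MvC n)) x = (eE n) (X 0 * (eE n).symm c)
    rw [map_mul, hc]
    rw [show (eE n) (X 0 : MvC (n+1)) = Polynomial.X from MvPolynomial.finSuccEquiv_X_zero]
    rw [RingEquiv.apply_symm_apply]
  · intro hx
    rw [Ideal.mem_span_singleton] at hx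
    obtain ⟨c, rfl⟩ := hx
    show κR n _ = 0
    rw [map_mul, κR_X0, zero_mul]

end MvHelpers

section Chain

@[local simp] lemma sux5_0 : Fin.succ (0 : Fin 5) = (1 : Fin 6) := by decide
@[local simp] lemma sux5_1 : Fin.succ (1 : Fin 5) = (2 : Fin 6) := by decide
@[local simp] lemma sux5_2 : Fin.succ (2 : Fin 5) = (3 : Fin 6) := by decide
@[local simp] lemma sux5_3 : Fin.succ (3 : Fin 5) = (4 : Fin 6) := by decide
@[local simp] lemma sux5_4 : Fin.succ (4 : Fin 5) = (5 : Fin 6) := by decide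
@[local simp] lemma sux6_0 : Fin.succ (0 : Fin 6) = (1 : Fin 7) := by decide
@[local simp] lemma sux6_1 : Fin.succ (1 : Fin 6) = (2 : Fin 7) := by decide
@[local simp] lemma sux6_2 : Fin.succ (2 : Fin 6) = (3 : Fin 7) := by decide
@[local simp] lemma sux6_3 : Fin.succ (3 : Fin 6) = (4 : Fin 7) := by decide
@[local simp] lemma sux6_4 : Fin.succ (4 : Fin 6) = (5 : Fin 7) := by decide
@[local simp] lemma sux6_5 : Fin.succ (5 : Fin 6) = (6 : Fin 7) := by decide
@[local simp] lemma sux7_0 : Fin.succ (0 : Fin 7) = (1 : Fin 8) := by decide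
@[local simp] lemma sux7_1 : Fin.succ (1 : Fin 7) = (2 : Fin 8) := by decide
@[local simp] lemma sux7_2 : Fin.succ (2 : Fin 7) = (3 : Fin 8) := by decide
@[local simp] lemma sux7_3 : Fin.succ (3 : Fin 7) = (4 : Fin 8) := by decide
@[local simp] lemma sux7_4 : Fin.succ (4 : Fin 7) = (5 : Fin 8) := by decide
@[local simp] lemma sux7_5 : Fin.succ (5 : Fin 7) = (6 : Fin 8) := by decide
@[local simp] lemma sux7_6 : Fin.succ (6 : Fin 7) = (7 : Fin 8) := by decide
@[local simp] lemma sux8_0 : Fin.succ (0 : Fin 8) = (1 : Fin 9) := by decide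
@[local simp] lemma sux8_1 : Fin.succ (1 : Fin 8) = (2 : Fin 9) := by decide
@[local simp] lemma sux8_2 : Fin.succ (2 : Fin 8) = (3 : Fin 9) := by decide
@[local simp] lemma sux8_3 : Fin.succ (3 : Fin 8) = (4 : Fin 9) := by decide
@[local simp] lemma sux8_4 : Fin.succ (4 : Fin 8) = (5 : Fin 9) := by decide
@[local simp] lemma sux8_5 : Fin.succ (5 : Fin 8) = (6 : Fin 9) := by decide
@[local simp] lemma sux8_6 : Fin.succ (6 : Fin 8) = (7 : Fin 9) := by decide
@[local simp] lemma sux8_7 : Fin.succ (7 : Fin 8) = (8 : Fin 9) := by decide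
@[local simp] lemma sux9_0 : Fin.succ (0 : Fin 9) = (1 : Fin 10) := by decide
@[local simp] lemma sux9_1 : Fin.succ (1 : Fin 9) = (2 : Fin 10) := by decide
@[local simp] lemma sux9_2 : Fin.succ (2 : Fin 9) = (3 : Fin 10) := by decide
@[local simp] lemma sux9_3 : Fin.succ (3 : Fin 9) = (4 : Fin 10) := by decide
@[local simp] lemma sux9_4 : Fin.succ (4 : Fin 9) = (5 : Fin 10) := by decide
@[local simp] lemma sux9_5 : Fin.succ (5 : Fin 9) = (6 : Fin 10) := by decide
@[local simp] lemma sux9_6 : Fin.succ (6 : Fin 9) = (7 : Fin 10) := by decide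
@[local simp] lemma sux9_7 : Fin.succ (7 : Fin 9) = (8 : Fin 10) := by decide
@[local simp] lemma sux9_8 : Fin.succ (8 : Fin 9) = (9 : Fin 10) := by decide
@[local simp] lemma sux10_0 : Fin.succ (0 : Fin 10) = (1 : Fin 11) := by decide
@[local simp] lemma sux10_1 : Fin.succ (1 : Fin 10) = (2 : Fin 11) := by decide
@[local simp] lemma sux10_2 : Fin.succ (2 : Fin 10) = (3 : Fin 11) := by decide
@[local simp] lemma sux10_3 : Fin.succ (3 : Fin 10) = (4 : Fin 11) := by decide
@[local simp] lemma sux10_4 : Fin.succ (4 : Fin 10) = (5 : Fin 11) := by decide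
@[local simp] lemma sux10_5 : Fin.succ (5 : Fin 10) = (6 : Fin 11) := by decide
@[local simp] lemma sux10_6 : Fin.succ (6 : Fin 10) = (7 : Fin 11) := by decide
@[local simp] lemma sux10_7 : Fin.succ (7 : Fin 10) = (8 : Fin 11) := by decide
@[local simp] lemma sux10_8 : Fin.succ (8 : Fin 10) = (9 : Fin 11) := by decide
@[local simp] lemma sux10_9 : Fin.succ (9 : Fin 10) = (10 : Fin 11) := by decide
@[local simp] lemma sux11_0 : Fin.succ (0 : Fin 11) = (1 : Fin 12) := by decide
@[local simp] lemma sux11_1 : Fin.succ (1 : Fin 11) = (2 : Fin 12) := by decide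
@[local simp] lemma sux11_2 : Fin.succ (2 : Fin 11) = (3 : Fin 12) := by decide
@[local simp] lemma sux11_3 : Fin.succ (3 : Fin 11) = (4 : Fin 12) := by decide
@[local simp] lemma sux11_4 : Fin.succ (4 : Fin 11) = (5 : Fin 12) := by decide
@[local simp] lemma sux11_5 : Fin.succ (5 : Fin 11) = (6 : Fin 12) := by decide
@[local simp] lemma sux11_6 : Fin.succ (6 : Fin 11) = (7 : Fin 12) := by decide
@[local simp] lemma sux11_7 : Fin.succ (7 : Fin 11) = (8 : Fin 12) := by decide
@[local simp] lemma sux11_8 : Fin.succ (8 : Fin 11) = (9 : Fin 12) := by decide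
@[local simp] lemma sux11_9 : Fin.succ (9 : Fin 11) = (10 : Fin 12) := by decide
@[local simp] lemma sux11_10 : Fin.succ (10 : Fin 11) = (11 : Fin 12) := by decide

lemma not_dvd_of_hom {R S : Type*} [CommRing R] [CommRing S] (f : R →+* S)
    {p d : R} (hp : f p = 0) (hd : f d ≠ 0) : ¬ p ∣ d := by
  rintro ⟨c, rfl⟩
  rw [map_mul, hp, zero_mul] at hd
  exact hd rfl

def pd1 : MvC 5 := X 1
def dd1 : MvC 5 := -(X 2 * X 4)
def d16 : MvC 6 := rename Fin.succ pd1 * X 0 + rename Fin.succ dd1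
def d17 : MvC 7 := rename Fin.succ d16
def d18 : MvC 8 := rename Fin.succ d17
def d08 : MvC 8 := X 6 * X 7 - X 3 * X 4
def g9 : MvC 9 := rename Fin.succ (X 0) * X 0 + rename Fin.succ d08
def d19 : MvC 9 := rename Fin.succ d18
def g10 : MvC 10 := rename Fin.succ g9
def d110 : MvC 10 := rename Fin.succ d19
def f11 : MvC 11 := rename Fin.succ (X 0) * X 0 + rename Fin.succ d110
def g11 : MvC 11 := rename Fin.succ g10
def d211 : MvC 11 := X 4 * X 3 + X 8 * X 9
def g12 : MvC 12 := rename Fin.succ g11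
def f112 : MvC 12 := rename Fin.succ f11
def f12 : MvC 12 := rename Fin.succ (-(X 0)) * X 0 + rename Fin.succ d211

lemma d16ex : d16 = X 2 * X 0 - X 3 * X 5 := by
  simp [d16, pd1, dd1, map_add, map_mul, map_neg, rename_X]; ring
lemma d17ex : d17 = X 3 * X 1 - X 4 * X 6 := by
  simp [d17, d16ex, map_sub, map_mul, rename_X]
lemma d18ex : d18 = X 4 * X 2 - X 5 * X 7 := by
  simp [d18, d17ex, map_sub, map_mul, rename_X]
lemma d19ex : d19 = X 5 * X 3 - X 6 * X 8 := by
  simp [d19, d18ex, map_sub, map_mul, rename_X]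
lemma d110ex : d110 = X 6 * X 4 - X 7 * X 9 := by
  simp [d110, d19ex, map_sub, map_mul, rename_X]
lemma g9ex : g9 = X 1 * X 0 + (X 7 * X 8 - X 4 * X 5) := by
  simp [g9, d08, map_add, map_sub, map_mul, rename_X]
lemma g10ex : g10 = X 2 * X 1 + (X 8 * X 9 - X 5 * X 6) := by
  simp [g10, g9ex, map_add, map_sub, map_mul, rename_X]
lemma g11ex : g11 = X 3 * X 2 + (X 9 * X 10 - X 6 * X 7) := by
  simp [g11, g10ex, map_add, map_sub, map_mul, rename_X]
lemma g12ex : g12 = X 4 * X 3 + (X 10 * X 11 - X 7 * X 8) := by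
  simp [g12, g11ex, map_add, map_sub, map_mul, rename_X]
lemma f11ex : f11 = X 1 * X 0 + (X 7 * X 5 - X 8 * X 10) := by
  simp [f11, d110ex, map_add, map_sub, map_mul, rename_X]
lemma f112ex : f112 = X 2 * X 1 + (X 8 * X 6 - X 9 * X 11) := by
  simp [f112, f11ex, map_add, map_sub, map_mul, rename_X]
lemma f12ex : f12 = -X 1 * X 0 + (X 5 * X 4 + X 9 * X 10) := by
  simp [f12, d211, map_add, map_neg, map_mul, rename_X]

end Chain



section PrimeChain

open Ideal

-- evaluation points
def c5 : Fin 5 → ℂ := fun i => if i = 2 ∨ i = 4 then 1 else 0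
def c8 : Fin 8 → ℂ := fun i => if i = 6 ∨ i = 7 then 1 else 0
def c10 : Fin 10 → ℂ := fun i => if i = 4 ∨ i = 6 then 1 else 0
def c11a : Fin 11 → ℂ := fun i => if i = 0 then 1 else 0
def c11b : Fin 11 → ℂ := fun i => if i = 8 ∨ i = 9 then 1 else 0

lemma P_d16 : Prime d16 := by
  apply base_mv (prime_X_mv 1)
  apply not_dvd_of_hom (MvPolynomial.eval c5)
  · simp [pd1, c5]
  · simp [dd1, c5]

lemma P_d17 : Prime d17 := prime_lift P_d16
lemma P_d18 : Prime d18 := prime_lift P_d17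
lemma P_g9 : Prime g9 := by
  apply base_mv prime_X0
  apply not_dvd_of_hom (MvPolynomial.eval c8)
  · simp [c8]
  · simp [d08, c8]
lemma P_g10 : Prime g10 := prime_lift P_g9
lemma P_g11 : Prime g11 := prime_lift P_g10
lemma P_g12 : Prime g12 := prime_lift P_g11

instance I_d17 : (span {d17}).IsPrime := (Ideal.span_singleton_prime P_d17.ne_zero).mpr P_d17
instance I_d18 : (span {d18}).IsPrime := (Ideal.span_singleton_prime P_d18.ne_zero).mpr P_d18
instance I_g9 : (span {g9}).IsPrime := (Ideal.span_singleton_prime P_g9.ne_zero).mpr P_g9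
instance I_g10 : (span {g10}).IsPrime := (Ideal.span_singleton_prime P_g10.ne_zero).mpr P_g10

lemma map_span_d17 : (span {d17}).map (φR 7) = span {d18} := by
  rw [Ideal.map_span, Set.image_singleton]; rfl
lemma map_span_g9 : (span {g9}).map (φR 9) = span {g10} := by
  rw [Ideal.map_span, Set.image_singleton]; rfl

-- I9 = (q0, d1) at level 9
lemma I9p : ((span {d18}).map (φR 8) ⊔ span {g9}).IsPrime := by
  have hp : Prime (Ideal.Quotient.mk (span {d18}) (X 0 : MvC 8)) := by
    rw [show (span {d18} : Ideal (MvC 8)) = (span {d17}).map (φR 7) from map_span_d17.symm]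
    exact prime_mk_X0_map
  have hd : d08 ∉ (span {d18} : Ideal (MvC 8)) ⊔ span {(X 0 : MvC 8)} := by
    rw [← Ideal.span_insert]
    apply not_mem_span_of_hom (MvPolynomial.eval c8)
    · intro g hg
      rcases hg with h | h
      · rw [h, d18ex]; simp [c8]
      · rw [Set.mem_singleton_iff.mp h]; simp [c8]
    · simp [d08, c8]
  exact layer_mv hp hd

lemma I9eq : (span {d18}).map (φR 8) ⊔ span {g9} = span {d19, g9} := by
  rw [Ideal.map_span, Set.image_singleton, Ideal.span_insert]; rfl

instance I9p' : (span ({d19, g9} : Set (MvC 9))).IsPrime := I9eq ▸ I9p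

lemma map_span_d19g9 : (span ({d19, g9} : Set (MvC 9))).map (φR 9) = span {d110, g10} := by
  rw [Ideal.map_span, Set.image_insert_eq, Set.image_singleton]; rfl

lemma I10p : (span ({d110, g10} : Set (MvC 10))).IsPrime := by
  rw [← map_span_d19g9]; exact isPrime_map_lift

-- J11 = (q0, q1) at level 11
lemma J11p : ((span {g10}).map (φR 10) ⊔ span {f11}).IsPrime := by
  have hp : Prime (Ideal.Quotient.mk (span {g10}) (X 0 : MvC 10)) := by
    rw [show (span {g10} : Ideal (MvC 10)) = (span {g9}).map (φR 9) from map_span_g9.symm]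
    exact prime_mk_X0_map
  have hd : d110 ∉ (span {g10} : Ideal (MvC 10)) ⊔ span {(X 0 : MvC 10)} := by
    rw [← Ideal.span_insert]
    apply not_mem_span_of_hom (MvPolynomial.eval c10)
    · intro g hg
      rcases hg with h | h
      · rw [h, g10ex]; simp [c10]
      · rw [Set.mem_singleton_iff.mp h]; simp [c10]
    · simp [d110ex, c10]
  exact layer_mv hp hd

lemma J11eq : (span {g10}).map (φR 10) ⊔ span {f11} = span {g11, f11} := by
  rw [Ideal.map_span, Set.image_singleton, Ideal.span_insert]; rfl

instance J11p' : (span ({g11, f11} : Set (MvC 11))).IsPrime := J11eq ▸ J11p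

end PrimeChain


section J12sec

open Ideal

lemma κ_comp_φ : (κR 10).comp (φR 10) = RingHom.id (MvC 10) := RingHom.ext fun r => κR_φR r

lemma hsupJ11 : (((span {g10}).map (φR 10) ⊔ span {f11}) ⊔ span {(X 0 : MvC 11)}).IsPrime := by
  apply isPrime_of_map_isPrime κR_surjective (J := _) (le_trans (le_of_eq ker_κR) le_sup_right)
  have hmap : (((span {g10}).map (φR 10) ⊔ span {f11}) ⊔ span {(X 0 : MvC 11)}).map (κR 10)
      = span ({d110, g10} : Set (MvC 10)) := by
    rw [Ideal.map_sup, Ideal.map_sup, Ideal.map_map, κ_comp_φ, Ideal.map_id,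
      Ideal.map_span, Ideal.map_span, Set.image_singleton, Set.image_singleton]
    have h1 : κR 10 f11 = d110 := by
      show κR 10 (φR 10 (X 0) * X 0 + φR 10 d110) = d110
      rw [map_add, _root_.map_mul, κR_φR, κR_X0, κR_φR, mul_zero, zero_add]
    have h2 : κR 10 (X 0 : MvC 11) = 0 := κR_X0
    rw [h1, h2, Ideal.span_singleton_eq_bot.mpr rfl, sup_bot_eq, Ideal.span_insert,
      sup_comm]
  rw [hmap]
  exact I10p

lemma X0_not_mem_J11 : (X 0 : MvC 11) ∉ span ({g11, f11} : Set (MvC 11)) := by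
  apply not_mem_span_of_hom (MvPolynomial.eval c11a)
  · intro g hg
    rcases hg with h | h
    · rw [h, g11ex]; simp [c11a]
    · rw [Set.mem_singleton_iff.mp h, f11ex]; simp [c11a]
  · simp [c11a]

lemma prime_mk_J11_X0 : Prime (Ideal.Quotient.mk ((span {g10}).map (φR 10) ⊔ span {f11}) (X 0 : MvC 11)) := by
  set J := (span {g10}).map (φR 10) ⊔ span {f11} with hJ
  have hne : Ideal.Quotient.mk J (X 0 : MvC 11) ≠ 0 := by
    rw [Ne, Ideal.Quotient.eq_zero_iff_mem, hJ, J11eq]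
    exact X0_not_mem_J11
  rw [← Ideal.span_singleton_prime hne]
  have hmapeq : Ideal.span {Ideal.Quotient.mk J (X 0 : MvC 11)}
      = (J ⊔ span {(X 0 : MvC 11)}).map (Ideal.Quotient.mk J) := by
    rw [Ideal.map_sup, Ideal.map_quotient_self, Ideal.map_span, Set.image_singleton,
      bot_sup_eq]
  rw [hmapeq]
  haveI := hsupJ11
  exact Ideal.map_isPrime_of_surjective Ideal.Quotient.mk_surjective
    (by rw [Ideal.mk_ker]; exact le_sup_left)

lemma hd_J12 : d211 ∉ ((span {g10}).map (φR 10) ⊔ span {f11}) ⊔ span {-(X 0 : MvC 11)} := by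
  rw [Ideal.span_singleton_neg, J11eq, ← Ideal.span_union]
  apply not_mem_span_of_hom (MvPolynomial.eval c11b)
  · intro g hg
    rcases hg with (h | h) | h
    · rw [h, g11ex]; simp [c11b]
    · rw [Set.mem_singleton_iff.mp h, f11ex]; simp [c11b]
    · rw [Set.mem_singleton_iff.mp h]; simp [c11b]
  · simp [d211, c11b]

lemma J12p : (((span {g10}).map (φR 10) ⊔ span {f11}).map (φR 11) ⊔ span {f12}).IsPrime := by
  haveI := J11p
  have hp : Prime (Ideal.Quotient.mk ((span {g10}).map (φR 10) ⊔ span {f11}) (-(X 0) : MvC 11)) := by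
    rw [show Ideal.Quotient.mk ((span {g10}).map (φR 10) ⊔ span {f11}) (-(X 0) : MvC 11)
        = -(Ideal.Quotient.mk ((span {g10}).map (φR 10) ⊔ span {f11}) (X 0 : MvC 11)) from
      RingHom.map_neg _ _]
    exact prime_mk_J11_X0.neg
  exact layer_mv hp hd_J12

lemma J12eq : ((span {g10}).map (φR 10) ⊔ span {f11}).map (φR 11) ⊔ span {f12}
    = span {g12, f112, f12} := by
  rw [J11eq, Ideal.map_span, Set.image_insert_eq, Set.image_singleton]
  have h1 : φR 11 g11 = g12 := rfl
  have h2 : φR 11 f11 = f112 := rfl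
  rw [h1, h2, ← Ideal.span_union]
  congr 1
  ext x
  simp only [Set.mem_union, Set.mem_insert_iff, Set.mem_singleton_iff]
  tauto

end J12sec


section Final

open Ideal

abbrev Sa' : Type := MvPolynomial (Fin 12) ℂ

def q0' : Sa' := X 4 * X 5 - X 7 * X 8 + X 10 * X 11
def q1' : Sa' := X 1 * X 2 - X 9 * X 11 + X 6 * X 8
def q2' : Sa' := X 3 * X 5 - X 0 * X 2 + X 9 * X 10
def q3' : Sa' := X 0 * X 1 - X 3 * X 4 + X 6 * X 7

def ρ : Fin 12 ≃ Fin 12 where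
  toFun := ![0,2,1,5,3,4,6,7,8,9,10,11]
  invFun := ![0,2,1,4,5,3,6,7,8,9,10,11]
  left_inv := by decide
  right_inv := by decide

@[local simp] lemma ρ0 : ρ 0 = 0 := by decide
@[local simp] lemma ρ1 : ρ 1 = 2 := by decide
@[local simp] lemma ρ2 : ρ 2 = 1 := by decide
@[local simp] lemma ρ3 : ρ 3 = 5 := by decide
@[local simp] lemma ρ4 : ρ 4 = 3 := by decide
@[local simp] lemma ρ5 : ρ 5 = 4 := by decide
@[local simp] lemma ρ6 : ρ 6 = 6 := by decide
@[local simp] lemma ρ7 : ρ 7 = 7 := by decide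
@[local simp] lemma ρ8 : ρ 8 = 8 := by decide
@[local simp] lemma ρ9 : ρ 9 = 9 := by decide
@[local simp] lemma ρ10 : ρ 10 = 10 := by decide
@[local simp] lemma ρ11 : ρ 11 = 11 := by decide

lemma hq0 : rename ρ q0' = g12 := by
  rw [g12ex]
  simp only [q0', map_add, map_sub, _root_.map_mul, rename_X, ρ4, ρ5, ρ7, ρ8, ρ10, ρ11]
  ring

lemma hq1 : rename ρ q1' = f112 := by
  rw [f112ex]
  simp only [q1', map_add, map_sub, _root_.map_mul, rename_X, ρ1, ρ2, ρ9, ρ11, ρ6, ρ8]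
  ring

lemma hq2 : rename ρ q2' = f12 := by
  rw [f12ex]
  simp only [q2', map_add, map_sub, _root_.map_mul, rename_X, ρ3, ρ5, ρ0, ρ2, ρ9, ρ10]
  ring

def E12 : Sa' ≃+* MvC 12 := (renameEquiv ℂ ρ).toRingEquiv

lemma E12_apply (x : Sa') : (E12 : Sa' →+* MvC 12) x = rename ρ x := rfl

lemma ker_E12_le {J : Ideal Sa'} : RingHom.ker (E12 : Sa' →+* MvC 12) ≤ J := by
  rw [(RingHom.injective_iff_ker_eq_bot (E12 : Sa' →+* MvC 12)).mp E12.injective]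
  exact bot_le

lemma P_q0 : Prime q0' := by
  have h := (MulEquiv.prime_iff (renameEquiv ℂ ρ).toMulEquiv (p := q0')).symm
  rw [show (renameEquiv ℂ ρ).toMulEquiv q0' = rename ρ q0' from rfl, hq0] at h
  exact h.mpr P_g12

lemma hP1 : (span {q0'} : Ideal Sa').IsPrime :=
  (Ideal.span_singleton_prime P_q0.ne_zero).mpr P_q0

lemma hP2 : (span ({q0', q1'} : Set Sa')).IsPrime := by
  apply isPrime_of_map_isPrime (f := (E12 : Sa' →+* MvC 12)) E12.surjective ker_E12_le
  rw [Ideal.map_span, Set.image_insert_eq, Set.image_singleton, E12_apply, E12_apply, hq0, hq1]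
  have h : span ({g12, f112} : Set (MvC 12)) = (span ({g11, f11} : Set (MvC 11))).map (φR 11) := by
    rw [Ideal.map_span, Set.image_insert_eq, Set.image_singleton]; rfl
  rw [h]
  exact isPrime_map_lift

lemma hP3 : (span ({q0', q1', q2'} : Set Sa')).IsPrime := by
  apply isPrime_of_map_isPrime (f := (E12 : Sa' →+* MvC 12)) E12.surjective ker_E12_le
  rw [Ideal.map_span, Set.image_insert_eq, Set.image_insert_eq, Set.image_singleton,
    E12_apply, E12_apply, E12_apply, hq0, hq1, hq2, ← J12eq]
  exact J12p

-- evaluation points in Sa'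
def w1 : Fin 12 → ℂ := fun i => if i = 1 ∨ i = 2 then 1 else 0
def w2 : Fin 12 → ℂ := fun i => if i = 3 ∨ i = 5 then 1 else 0
def w3 : Fin 12 → ℂ := fun i => if i = 6 ∨ i = 7 then 1 else 0

lemma hq1n : q1' ∉ (span {q0'} : Ideal Sa') := by
  apply not_mem_span_of_hom (MvPolynomial.eval w1)
  · intro g hg
    rw [Set.mem_singleton_iff.mp hg]
    simp [q0', w1]
  · simp [q1', w1]

lemma hq2n : q2' ∉ (span ({q0', q1'} : Set Sa')) := by
  apply not_mem_span_of_hom (MvPolynomial.eval w2)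
  · intro g hg
    rcases hg with h | h
    · rw [h]; simp [q0', w2]
    · rw [Set.mem_singleton_iff.mp h]; simp [q1', w2]
  · simp [q2', w2]

lemma hq3n : q3' ∉ (span ({q0', q1', q2'} : Set Sa')) := by
  apply not_mem_span_of_hom (MvPolynomial.eval w3)
  · intro g hg
    rcases hg with h | h | h
    · rw [h]; simp [q0', w3]
    · rw [h]; simp [q1', w3]
    · rw [Set.mem_singleton_iff.mp h]; simp [q2', w3]
  · simp [q3', w3]

lemma htopn : (1 : Sa') ∉ (span ({q0', q1', q2', q3'} : Set Sa')) := by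
  apply not_mem_span_of_hom (MvPolynomial.eval (fun _ => (0:ℂ)))
  · intro g hg
    rcases hg with h | h | h | h
    · rw [h]; simp [q0']
    · rw [h]; simp [q1']
    · rw [h]; simp [q2']
    · rw [Set.mem_singleton_iff.mp h]; simp [q3']
  · simp

lemma smulreg {I : Ideal Sa'} (hI : I.IsPrime) {q : Sa'} (hq : q ∉ I) :
    IsSMulRegular (Sa' ⧸ (I • ⊤ : Submodule Sa' Sa')) q := by
  intro x y hxy
  obtain ⟨a, rfl⟩ := Submodule.Quotient.mk_surjective _ x
  obtain ⟨b, rfl⟩ := Submodule.Quotient.mk_surjective _ y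
  have hIt : (I • ⊤ : Submodule Sa' Sa') = (I : Submodule Sa' Sa') := by
    rw [smul_eq_mul, Ideal.mul_top]
  simp only at hxy
  rw [← Submodule.Quotient.mk_smul, ← Submodule.Quotient.mk_smul, Submodule.Quotient.eq,
    hIt] at hxy
  rw [Submodule.Quotient.eq, hIt]
  have h2 : q * (a - b) ∈ I := by
    have h3 : q • a - q • b = q * (a - b) := by
      rw [smul_eq_mul, smul_eq_mul]; ring
    rwa [h3] at hxy
  rcases hI.mem_or_mem h2 with h | h
  · exact absurd h hq
  · exact h

theorem stmt0' : RingTheory.Sequence.IsRegular Sa' [q0', q1', q2', q3'] := by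
  rw [RingTheory.Sequence.isRegular_iff]
  constructor
  · rw [RingTheory.Sequence.isWeaklyRegular_iff]
    intro i hi
    simp only [List.length_cons, List.length_nil] at hi
    interval_cases i
    · show IsSMulRegular _ q0'
      have h0 : Ideal.ofList (List.take 0 [q0', q1', q2', q3']) = (⊥ : Ideal Sa') := by
        simp
      rw [h0]
      refine smulreg Ideal.bot_prime ?_
      rw [Ideal.mem_bot]
      exact P_q0.ne_zero
    · show IsSMulRegular _ q1'
      have h0 : Ideal.ofList (List.take 1 [q0', q1', q2', q3']) = span ({q0'} : Set Sa') := by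
        show span _ = _
        congr 1
        ext r
        simp
      rw [h0]
      exact smulreg hP1 hq1n
    · show IsSMulRegular _ q2'
      have h0 : Ideal.ofList (List.take 2 [q0', q1', q2', q3']) = span ({q0', q1'} : Set Sa') := by
        show span _ = _
        congr 1
        ext r
        simp
      rw [h0]
      exact smulreg hP2 hq2n
    · show IsSMulRegular _ q3'
      have h0 : Ideal.ofList (List.take 3 [q0', q1', q2', q3']) = span ({q0', q1', q2'} : Set Sa') := by
        show span _ = _
        congr 1
        ext r
        simp
      rw [h0]
      exact smulreg hP3 hq3n
  · intro h
    have h1 : (1 : Sa') ∈ (Ideal.ofList [q0', q1', q2', q3'] • (⊤ : Submodule Sa' Sa')) := by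
      rw [← h]; trivial
    have h2 : Ideal.ofList [q0', q1', q2', q3'] = span ({q0', q1', q2', q3'} : Set Sa') := by
      show span _ = _
      congr 1
      ext r
      simp
    rw [smul_eq_mul, Ideal.mul_top, h2] at h1
    exact htopn h1

end Final

/-- The four Pfaffian quadrics form a regular sequence in the polynomial ring
`ℂ[a₀₁,…,a₃₂]` in 12 variables; in particular `Q = V(q0,q1,q2,q3) ⊆ ℙ¹¹`
is a complete intersection of codimension 4. -/
theorem stmt0 : RingTheory.Sequence.IsRegular Sa [q0, q1, q2, q3] := by
  exact stmt0'

end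
end

section
/- Let R be a commutative ring, n a natural number, and F ∈ R[X_1,…,X_n] a homogeneous polynomial of degree 2. Let p, q ∈ R^n satisfy F(p) = 0, F(q) = 0, and Σ_{i=1}^n q_i · (∂F/∂X_i)(p) = 0 (i.e., q lies on the tangent hyperplane of V(F) at p). Then F(s·p + t·q) = 0 for all s, t ∈ R; in particular the whole line through p and q is contained in V(F). (This is the lemma underlying the construction of lines contained in the complete intersection of quadrics Q: if p ∈ Q and q ∈ Q ∩ T_pQ, then the line pq lies in Q.) -/
open MvPolynomial

private lemma degree_two_classify {n : ℕ} (d : Fin n →₀ ℕ) (h : d.degree = 2) :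
    ∃ i j : Fin n, d = Finsupp.single i 1 + Finsupp.single j 1 := by
  have hc : Multiset.card d.toMultiset = 2 := by
    rw [Finsupp.card_toMultiset]
    simpa [Finsupp.degree_apply, Finsupp.sum] using h
  obtain ⟨i, j, hij⟩ := Multiset.card_eq_two.mp hc
  refine ⟨i, j, ?_⟩
  have h2 : d.toMultiset = {i} + {j} := by rw [hij, Multiset.singleton_add, Multiset.insert_eq_cons]
  have h3 := congrArg Multiset.toFinsupp h2
  rw [Finsupp.toMultiset_toFinsupp, map_add, Multiset.toFinsupp_singleton,
    Multiset.toFinsupp_singleton] at h3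
  exact h3

private lemma monomial_two_eq {n : ℕ} {R : Type*} [CommRing R] (c : R) (i j : Fin n) :
    (monomial (Finsupp.single i 1 + Finsupp.single j 1) c : MvPolynomial (Fin n) R)
      = C c * (X i * X j) := by
  rw [monomial_eq]
  congr 1
  rw [Finsupp.prod_add_index (by simp) (by intro a _ b₁ b₂; rw [pow_add])]
  simp

private lemma key_monomial {n : ℕ} {R : Type*} [CommRing R] (c : R) (i j : Fin n)
    (p q : Fin n → R) (s t : R) :
    eval (fun k => s * p k + t * q k) (C c * (X i * X j) : MvPolynomial (Fin n) R) =
      s ^ 2 * eval p (C c * (X i * X j)) + t ^ 2 * eval q (C c * (X i * X j)) +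
        s * t * ∑ k, q k * eval p (pderiv k (C c * (X i * X j))) := by
  have hd : ∀ k : Fin n, eval p (pderiv k (C c * (X i * X j) : MvPolynomial (Fin n) R))
      = c * ((if i = k then p j else 0) + (if j = k then p i else 0)) := by
    intro k
    by_cases hik : i = k <;> by_cases hjk : j = k <;>
      simp [pderiv_mul, pderiv_X, Pi.single_apply, hik, hjk] <;> ring
  have hsum : ∑ k, q k * eval p (pderiv k (C c * (X i * X j) : MvPolynomial (Fin n) R))
      = c * (q i * p j + q j * p i) := by
    simp only [hd, mul_add, mul_ite, mul_zero]
    rw [Finset.sum_add_distrib, Finset.sum_ite_eq, Finset.sum_ite_eq]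
    simp; ring
  rw [hsum]
  simp only [eval_mul, eval_C, eval_X]
  ring

private lemma key_monomial' {n : ℕ} {R : Type*} [CommRing R] (c : R) (d : Fin n →₀ ℕ)
    (h : d.degree = 2) (p q : Fin n → R) (s t : R) :
    eval (fun k => s * p k + t * q k) (monomial d c : MvPolynomial (Fin n) R) =
      s ^ 2 * eval p (monomial d c) + t ^ 2 * eval q (monomial d c) +
        s * t * ∑ k, q k * eval p (pderiv k (monomial d c)) := by
  obtain ⟨i, j, rfl⟩ := degree_two_classify d h
  rw [monomial_two_eq]
  exact key_monomial c i j p q s t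

/-- Let `F` be a homogeneous polynomial of degree 2 over a commutative ring `R`,
and let `p, q ∈ Rⁿ` satisfy `F(p) = 0`, `F(q) = 0`, and
`∑ i, q i * (∂F/∂Xᵢ)(p) = 0` (i.e. `q` lies on the tangent hyperplane of
`V(F)` at `p`). Then `F(s·p + t·q) = 0` for all `s, t ∈ R`: the whole line
through `p` and `q` is contained in `V(F)`. -/
theorem stmt3 (R : Type*) [CommRing R] (n : ℕ) (F : MvPolynomial (Fin n) R)
    (hF : F.IsHomogeneous 2) (p q : Fin n → R)
    (hp : eval p F = 0) (hq : eval q F = 0)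
    (htan : ∑ i, q i * eval p (pderiv i F) = 0) :
    ∀ s t : R, eval (fun i => s * p i + t * q i) F = 0 := by
  intro s t
  have key : eval (fun i => s * p i + t * q i) F =
      s ^ 2 * eval p F + t ^ 2 * eval q F + s * t * ∑ i, q i * eval p (pderiv i F) := by
    conv_lhs => rw [F.as_sum]
    rw [map_sum]
    rw [Finset.sum_congr rfl (fun d hd => key_monomial' (coeff d F) d
      (by
        have := hF (mem_support_iff.mp hd)
        rw [Finsupp.degree_eq_weight_one]; exact this) p q s t)]
    rw [Finset.sum_add_distrib, Finset.sum_add_distrib, ← Finset.mul_sum, ← Finset.mul_sum,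
      ← Finset.mul_sum]
    congr 2
    · rw [← map_sum, ← F.as_sum]
    · rw [← map_sum, ← F.as_sum]
    · rw [Finset.sum_comm]
      congr 1
      funext k
      rw [← Finset.mul_sum, ← map_sum, ← map_sum, ← F.as_sum]
  rw [key, hp, hq, htan]
  ring
end

section
/- Let u_0, u_1, u_2, u_3 ∈ ℂ with (u_0, u_1) ≠ (0,0) and (u_2, u_3) ≠ (0,0), and let p ∈ ℂ^12 be the point whose coordinates are a_{3,2} = u_0, a_{2,3} = u_1, a_{1,0} = u_2, a_{0,1} = u_3 and all other a_{i,j} = 0. Then p satisfies q_0(p) = q_1(p) = q_2(p) = q_3(p) = 0, and the 4×12 Jacobian matrix ((∂q_k/∂a_{i,j})(p))_k has rank exactly 4. (Hence Q is smooth of codimension 4 at p and the projective tangent space T_pQ is a P^7, as used in the parametrization of ℤ/3ℤ-Godeaux lines.) -/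
/- Variable indices in `Fin 12`:
0:a₀₁ 1:a₀₂ 2:a₀₃ 3:a₁₀ 4:a₁₂ 5:a₁₃ 6:a₂₀ 7:a₂₁ 8:a₂₃ 9:a₃₀ 10:a₃₁ 11:a₃₂ -/

open MvPolynomial

noncomputable section

def qs : Fin 4 → Sa := ![q0, q1, q2, q3]

lemma det4 (a b c d : ℂ) : (!![a,0,0,0;0,b,0,0;0,0,c,0;0,0,0,d]).det = a*b*c*d := by
  simp [Matrix.det_succ_row_zero, Fin.sum_univ_succ]
  ring

lemma rank_eq_four_of_col (M : Matrix (Fin 4) (Fin 12) ℂ) (c : Fin 4 → Fin 12)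
    (h : (M.submatrix id c).det ≠ 0) : M.rank = 4 := by
  refine le_antisymm (M.rank_le_card_height.trans (by simp)) ?_
  have hu : IsUnit (M.submatrix id c) :=
    (Matrix.isUnit_iff_isUnit_det _).2 (isUnit_iff_ne_zero.2 h)
  have h1 : (M.submatrix id c).rank = 4 := by
    rw [Matrix.rank_of_isUnit _ hu]; simp
  have h2 : M.submatrix id c = M * (1 : Matrix (Fin 12) (Fin 12) ℂ).submatrix (Equiv.refl _) c := by
    rw [Matrix.mul_submatrix_one]; rfl
  calc (4 : ℕ) = (M.submatrix id c).rank := h1.symm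
    _ ≤ M.rank := by rw [h2]; exact Matrix.rank_mul_le_left _ _

set_option maxHeartbeats 1000000 in
/-- Let `(u₀,u₁) ≠ (0,0)` and `(u₂,u₃) ≠ (0,0)`, and let `p ∈ ℂ¹²` be the point
with `a₃₂ = u₀`, `a₂₃ = u₁`, `a₁₀ = u₂`, `a₀₁ = u₃` and all other coordinates 0.
Then `p` lies on `Q = V(q0,q1,q2,q3)` and the `4×12` Jacobian matrix of the
quadrics at `p` has rank exactly 4; hence `Q` is smooth of codimension 4 at `p`
and `T_pQ ≅ ℙ⁷`. -/
theorem stmt5 (u0 u1 u2 u3 : ℂ) (h01 : (u0, u1) ≠ (0, 0)) (h23 : (u2, u3) ≠ (0, 0)) :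
    (∀ k : Fin 4, eval (![u3, 0, 0, u2, 0, 0, 0, 0, u1, 0, 0, u0]) (qs k) = 0) ∧
    (Matrix.of fun (k : Fin 4) (i : Fin 12) =>
        eval (![u3, 0, 0, u2, 0, 0, 0, 0, u1, 0, 0, u0]) (pderiv i (qs k))).rank = 4 := by
  have e0 : (![u3, 0, 0, u2, 0, 0, 0, 0, u1, 0, 0, u0] : Fin 12 → ℂ) 0 = u3 := rfl
  have e1 : (![u3, 0, 0, u2, 0, 0, 0, 0, u1, 0, 0, u0] : Fin 12 → ℂ) 1 = 0 := rfl
  have e2 : (![u3, 0, 0, u2, 0, 0, 0, 0, u1, 0, 0, u0] : Fin 12 → ℂ) 2 = 0 := rfl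
  have e3 : (![u3, 0, 0, u2, 0, 0, 0, 0, u1, 0, 0, u0] : Fin 12 → ℂ) 3 = u2 := rfl
  have e4 : (![u3, 0, 0, u2, 0, 0, 0, 0, u1, 0, 0, u0] : Fin 12 → ℂ) 4 = 0 := rfl
  have e5 : (![u3, 0, 0, u2, 0, 0, 0, 0, u1, 0, 0, u0] : Fin 12 → ℂ) 5 = 0 := rfl
  have e6 : (![u3, 0, 0, u2, 0, 0, 0, 0, u1, 0, 0, u0] : Fin 12 → ℂ) 6 = 0 := rfl
  have e7 : (![u3, 0, 0, u2, 0, 0, 0, 0, u1, 0, 0, u0] : Fin 12 → ℂ) 7 = 0 := rfl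
  have e8 : (![u3, 0, 0, u2, 0, 0, 0, 0, u1, 0, 0, u0] : Fin 12 → ℂ) 8 = u1 := rfl
  have e9 : (![u3, 0, 0, u2, 0, 0, 0, 0, u1, 0, 0, u0] : Fin 12 → ℂ) 9 = 0 := rfl
  have e10 : (![u3, 0, 0, u2, 0, 0, 0, 0, u1, 0, 0, u0] : Fin 12 → ℂ) 10 = 0 := rfl
  have e11 : (![u3, 0, 0, u2, 0, 0, 0, 0, u1, 0, 0, u0] : Fin 12 → ℂ) 11 = u0 := rfl
  constructor
  · intro k
    fin_cases k <;>
      simp [qs, q0, q1, q2, q3, e0, e1, e2, e3, e4, e5, e6, e7, e8, e9, e10, e11]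
  · have hJ : (Matrix.of fun (k : Fin 4) (i : Fin 12) =>
        eval (![u3, 0, 0, u2, 0, 0, 0, 0, u1, 0, 0, u0]) (pderiv i (qs k))) =
        Matrix.of ![![0,0,0,0,0,0,0,-u1,0,0,u0,0],
                    ![0,0,0,0,0,0,u1,0,0,-u0,0,0],
                    ![0,0,-u3,0,0,u2,0,0,0,0,0,0],
                    ![0,u3,0,0,-u2,0,0,0,0,0,0,0]] := by
      ext k i
      fin_cases k <;> fin_cases i <;>
        simp [qs, q0, q1, q2, q3, pderiv_mul,
          e0, e1, e2, e3, e4, e5, e6, e7, e8, e9, e10, e11] <;> rfl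
    rw [hJ]
    have h0 : u0 ≠ 0 ∨ u1 ≠ 0 := by
      by_contra h; push_neg at h; exact h01 (by simp [h.1, h.2])
    have h2 : u2 ≠ 0 ∨ u3 ≠ 0 := by
      by_contra h; push_neg at h; exact h23 (by simp [h.1, h.2])
    rcases h0 with h0 | h0 <;> rcases h2 with h2 | h2
    · refine rank_eq_four_of_col _ ![10, 9, 5, 4] ?_
      have hs : (Matrix.of ![![0,0,0,0,0,0,0,-u1,0,0,u0,0],
                    ![0,0,0,0,0,0,u1,0,0,-u0,0,0],
                    ![0,0,-u3,0,0,u2,0,0,0,0,0,0],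
                    ![0,u3,0,0,-u2,0,0,0,0,0,0,0]]).submatrix id ![10, 9, 5, 4] =
          !![u0,0,0,0;0,-u0,0,0;0,0,u2,0;0,0,0,-u2] := by
        ext i j; fin_cases i <;> fin_cases j <;> rfl
      rw [hs, det4]
      exact mul_ne_zero (mul_ne_zero (mul_ne_zero h0 (neg_ne_zero.2 h0)) h2) (neg_ne_zero.2 h2)
    · refine rank_eq_four_of_col _ ![10, 9, 2, 1] ?_
      have hs : (Matrix.of ![![0,0,0,0,0,0,0,-u1,0,0,u0,0],
                    ![0,0,0,0,0,0,u1,0,0,-u0,0,0],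
                    ![0,0,-u3,0,0,u2,0,0,0,0,0,0],
                    ![0,u3,0,0,-u2,0,0,0,0,0,0,0]]).submatrix id ![10, 9, 2, 1] =
          !![u0,0,0,0;0,-u0,0,0;0,0,-u3,0;0,0,0,u3] := by
        ext i j; fin_cases i <;> fin_cases j <;> rfl
      rw [hs, det4]
      exact mul_ne_zero (mul_ne_zero (mul_ne_zero h0 (neg_ne_zero.2 h0)) (neg_ne_zero.2 h2)) h2
    · refine rank_eq_four_of_col _ ![7, 6, 5, 4] ?_
      have hs : (Matrix.of ![![0,0,0,0,0,0,0,-u1,0,0,u0,0],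
                    ![0,0,0,0,0,0,u1,0,0,-u0,0,0],
                    ![0,0,-u3,0,0,u2,0,0,0,0,0,0],
                    ![0,u3,0,0,-u2,0,0,0,0,0,0,0]]).submatrix id ![7, 6, 5, 4] =
          !![-u1,0,0,0;0,u1,0,0;0,0,u2,0;0,0,0,-u2] := by
        ext i j; fin_cases i <;> fin_cases j <;> rfl
      rw [hs, det4]
      exact mul_ne_zero (mul_ne_zero (mul_ne_zero (neg_ne_zero.2 h0) h0) h2) (neg_ne_zero.2 h2)
    · refine rank_eq_four_of_col _ ![7, 6, 2, 1] ?_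
      have hs : (Matrix.of ![![0,0,0,0,0,0,0,-u1,0,0,u0,0],
                    ![0,0,0,0,0,0,u1,0,0,-u0,0,0],
                    ![0,0,-u3,0,0,u2,0,0,0,0,0,0],
                    ![0,u3,0,0,-u2,0,0,0,0,0,0,0]]).submatrix id ![7, 6, 2, 1] =
          !![-u1,0,0,0;0,u1,0,0;0,0,-u3,0;0,0,0,u3] := by
        ext i j; fin_cases i <;> fin_cases j <;> rfl
      rw [hs, det4]
      exact mul_ne_zero (mul_ne_zero (mul_ne_zero (neg_ne_zero.2 h0) h0) (neg_ne_zero.2 h2)) h2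


end
end
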